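/- Let S and A be finite nonempty sets, Safe ⊆ S, p : S → A → S → ℝ a transition kernel with p(s,a,s') ≥ 0 and ∑_{s'} p(s,a,s') = 1 for all s, a, and π : ℝ^d → S → A → ℝ a parameterized policy with π(θ,s,a) > 0 and ∑_{a} π(θ,s,a) = 1 for all θ, s, such that θ ↦ π(θ,s,a) is differentiable for every s, a. Fix T ≥ 2, an initial state s_0 ∈ Safe, and define W_T(θ,s) = ∑_{a} π(θ,s,a) ∑_{s'} p(s,a,s')·𝟙(s' ∈ Safe). For a full trajectory τ = (a_0, s_1, …, a_{T−1}, s_T) let q_θ(τ) = ∏_{t=0}^{T−1} π(θ,s_t,a_t)·p(s_t,a_t,s_{t+1}) and G_1(τ) = ∏_{t=1}^{T} 𝟙(s_t ∈ Safe); for a partial trajectory σ = (a_0, s_1, …, a_{T−2}, s_{T−1}) let q_θ^{(T−1)}(σ) = ∏_{t=0}^{T−2} π(θ,s_t,a_t)·p(s_t,a_t,s_{t+1}). Then for every θ: ∑_{σ} q_θ^{(T−1)}(σ)·(∏_{t=1}^{T−1} 𝟙(s_t ∈ Safe))·∇_θ W_T(θ, s_{T−1}) = ∑_{τ} q_θ(τ)·G_1(τ)·∇_θ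 log π(θ, s_{T−1}, a_{T−1}). In expectation notation: E[∇_θ E[G_T | S_{T−1}]·∏_{t=1}^{T−1} 𝟙(S_t ∈ Safe) | S_0] = E[G_1·∇_θ log π_θ(A_{T−1} | S_{T−1}) | S_0]. -/

import Mathlib

open scoped BigOperators

noncomputable section

/-- Pad a finite tuple to a function on all of `ℕ` (values beyond `T` are arbitrary). -/
def pad {α : Type*} [Nonempty α] {T : ℕ} (f : Fin T → α) : ℕ → α :=
  fun n => if h : n < T then f ⟨n, h⟩ else Classical.arbitrary α

/-- The state sequence of a trajectory: `s_0 = s0` and `s_{m+1} = ss m`. -/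
def stSeq {S : Type*} [Nonempty S] {T : ℕ} (s0 : S) (ss : Fin T → S) : ℕ → S
  | 0 => s0
  | (m + 1) => pad ss m

/-- Indicator (as a real number) that a state is safe. -/
def safeInd {S : Type*} (Safe : Set S) [DecidablePred (· ∈ Safe)] (s : S) : ℝ :=
  if s ∈ Safe then 1 else 0

/-- Probability of the (partial) trajectory `(a_0, s_1, …, a_{T-1}, s_T)` starting from `s0`:
`∏_{t=0}^{T-1} π(θ, s_t, a_t) · p(s_t, a_t, s_{t+1})`. -/
def qTraj {S A : Type*} [Nonempty S] [Nonempty A] {d : ℕ}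
    (p : S → A → S → ℝ) (pol : EuclideanSpace ℝ (Fin d) → S → A → ℝ)
    (s0 : S) (T : ℕ) (θ : EuclideanSpace ℝ (Fin d)) (τ : (Fin T → A) × (Fin T → S)) : ℝ :=
  ∏ t ∈ Finset.range T,
    pol θ (stSeq s0 τ.2 t) (pad τ.1 t) * p (stSeq s0 τ.2 t) (pad τ.1 t) (stSeq s0 τ.2 (t + 1))

/-- Product of safety indicators `∏_{t=1}^{m} 𝟙(s_t ∈ Safe)` along a trajectory. -/
def safeProd {S : Type*} [Nonempty S] (Safe : Set S) [DecidablePred (· ∈ Safe)]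
    (s0 : S) {T : ℕ} (ss : Fin T → S) (m : ℕ) : ℝ :=
  ∏ t ∈ Finset.Icc 1 m, safeInd Safe (stSeq s0 ss t)

/-- One step safety probability `W_T(θ,s) = E[G_T | S_{T-1} = s]`. -/
def WT {S A : Type*} [Fintype S] [Fintype A] {d : ℕ}
    (Safe : Set S) [DecidablePred (· ∈ Safe)]
    (p : S → A → S → ℝ) (pol : EuclideanSpace ℝ (Fin d) → S → A → ℝ)
    (θ : EuclideanSpace ℝ (Fin d)) (s : S) : ℝ :=
  ∑ a, pol θ s a * ∑ s', p s a s' * safeInd Safe s'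

/- ----------------- auxiliary lemmas ----------------- -/

lemma pad_lt {α : Type*} [Nonempty α] {n : ℕ} (f : Fin n → α) {t : ℕ} (ht : t < n) :
    pad f t = f ⟨t, ht⟩ := dif_pos ht

lemma pad_snoc_lt {α : Type*} [Nonempty α] {n : ℕ} (f : Fin n → α) (x : α) {t : ℕ}
    (ht : t < n) : pad (Fin.snoc f x : Fin (n + 1) → α) t = f ⟨t, ht⟩ := by
  rw [pad_lt _ (Nat.lt_succ_of_lt ht)]
  have h : (⟨t, Nat.lt_succ_of_lt ht⟩ : Fin (n + 1)) = Fin.castSucc ⟨t, ht⟩ := rfl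
  rw [h, Fin.snoc_castSucc]

lemma pad_snoc_last {α : Type*} [Nonempty α] {n : ℕ} (f : Fin n → α) (x : α) :
    pad (Fin.snoc f x : Fin (n + 1) → α) n = x := by
  rw [pad_lt _ (Nat.lt_succ_self n)]
  have h : (⟨n, Nat.lt_succ_self n⟩ : Fin (n + 1)) = Fin.last n := rfl
  rw [h, Fin.snoc_last]

lemma stSeq_snoc {S : Type*} [Nonempty S] {n : ℕ} (s0 : S) (ss : Fin n → S) (s' : S)
    {t : ℕ} (ht : t ≤ n) :
    stSeq s0 (Fin.snoc ss s' : Fin (n + 1) → S) t = stSeq s0 ss t := by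
  cases t with
  | zero => rfl
  | succ m =>
    show pad (Fin.snoc ss s') m = pad ss m
    rw [pad_snoc_lt ss s' (by omega), pad_lt ss (by omega)]

lemma stSeq_snoc_top {S : Type*} [Nonempty S] {n : ℕ} (s0 : S) (ss : Fin n → S) (s' : S) :
    stSeq s0 (Fin.snoc ss s' : Fin (n + 1) → S) (n + 1) = s' := by
  show pad (Fin.snoc ss s') n = s'
  exact pad_snoc_last ss s'

lemma qTraj_snoc {S A : Type*} [Nonempty S] [Nonempty A] {d : ℕ}
    (p : S → A → S → ℝ) (pol : EuclideanSpace ℝ (Fin d) → S → A → ℝ)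
    (s0 : S) {n : ℕ} (θ : EuclideanSpace ℝ (Fin d))
    (aa : Fin n → A) (ss : Fin n → S) (a : A) (s' : S) :
    qTraj p pol s0 (n + 1) θ (Fin.snoc aa a, Fin.snoc ss s') =
      qTraj p pol s0 n θ (aa, ss) *
        (pol θ (stSeq s0 ss n) a * p (stSeq s0 ss n) a s') := by
  unfold qTraj
  rw [Finset.prod_range_succ]
  congr 1
  · refine Finset.prod_congr rfl fun t ht => ?_
    rw [Finset.mem_range] at ht
    rw [show ((Fin.snoc aa a, Fin.snoc ss s') : (Fin (n+1) → A) × (Fin (n+1) → S)).2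
        = Fin.snoc ss s' from rfl]
    rw [stSeq_snoc s0 ss s' ht.le, stSeq_snoc s0 ss s' (by omega),
      pad_snoc_lt aa a ht, pad_lt aa ht]
  · rw [show ((Fin.snoc aa a, Fin.snoc ss s') : (Fin (n+1) → A) × (Fin (n+1) → S)).2
        = Fin.snoc ss s' from rfl]
    rw [stSeq_snoc s0 ss s' le_rfl, stSeq_snoc_top s0 ss s', pad_snoc_last aa a]

lemma safeProd_snoc {S : Type*} [Nonempty S] (Safe : Set S) [DecidablePred (· ∈ Safe)]
    (s0 : S) {n : ℕ} (ss : Fin n → S) (s' : S) :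
    safeProd Safe s0 (Fin.snoc ss s' : Fin (n + 1) → S) (n + 1) =
      safeProd Safe s0 ss n * safeInd Safe s' := by
  unfold safeProd
  rw [Finset.prod_Icc_succ_top (by omega : 1 ≤ n + 1)]
  congr 1
  · refine Finset.prod_congr rfl fun t ht => ?_
    rw [Finset.mem_Icc] at ht
    rw [stSeq_snoc s0 ss s' ht.2]
  · rw [stSeq_snoc_top s0 ss s']

lemma gradient_sum_mul {A : Type*} [Fintype A] {d : ℕ}
    (f : A → EuclideanSpace ℝ (Fin d) → ℝ) (c : A → ℝ)
    (hf : ∀ a, Differentiable ℝ (f a)) (θ : EuclideanSpace ℝ (Fin d)) :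
    gradient (fun θ' => ∑ a, f a θ' * c a) θ = ∑ a, c a • gradient (f a) θ := by
  have h : HasFDerivAt (fun θ' => ∑ a, f a θ' * c a)
      (∑ a, c a • fderiv ℝ (f a) θ) θ :=
    HasFDerivAt.fun_sum fun a _ => ((hf a θ).hasFDerivAt).mul_const (c a)
  unfold gradient
  rw [h.fderiv, map_sum]
  exact Finset.sum_congr rfl fun a _ => by rw [map_smul]

lemma gradient_WT {S A : Type*} [Fintype S] [Fintype A] {d : ℕ}
    (Safe : Set S) [DecidablePred (· ∈ Safe)]
    (p : S → A → S → ℝ) (pol : EuclideanSpace ℝ (Fin d) → S → A → ℝ)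
    (hpold : ∀ s a, Differentiable ℝ (fun θ => pol θ s a))
    (s : S) (θ : EuclideanSpace ℝ (Fin d)) :
    gradient (fun θ' => WT Safe p pol θ' s) θ =
      ∑ a, (∑ s', p s a s' * safeInd Safe s') • gradient (fun θ' => pol θ' s a) θ :=
  gradient_sum_mul (fun a θ' => pol θ' s a) (fun a => ∑ s', p s a s' * safeInd Safe s')
    (fun a => hpold s a) θ

/-- The snoc equivalence on pairs of trajectories. -/
def snocPairEquiv (A S : Type*) (n : ℕ) :
    (((Fin n → A) × (Fin n → S)) × (A × S)) ≃ ((Fin (n + 1) → A) × (Fin (n + 1) → S)) where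
  toFun x := (Fin.snoc x.1.1 x.2.1, Fin.snoc x.1.2 x.2.2)
  invFun τ := ((Fin.init τ.1, Fin.init τ.2), (τ.1 (Fin.last n), τ.2 (Fin.last n)))
  left_inv x := by simp
  right_inv τ := by simp

/-- Equation (70) of the paper:
`E[∇_θ E[G_T | S_{T-1}] ∏_{t=1}^{T-1} 𝟙(S_t ∈ Safe) | S_0]
  = E[G_1 ∇_θ log π_θ(A_{T-1} | S_{T-1}) | S_0]`,
where the left-hand side is a sum over partial trajectories `σ = (a_0, s_1, …, a_{T-2}, s_{T-1})`
and the right-hand side over full trajectories `τ = (a_0, s_1, …, a_{T-1}, s_T)`. -/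
theorem expectation_grad_WT_eq_logtrick
    {S A : Type*} [Fintype S] [Fintype A] [Nonempty S] [Nonempty A]
    (Safe : Set S) [DecidablePred (· ∈ Safe)] (d : ℕ)
    (p : S → A → S → ℝ)
    (hp0 : ∀ s a s', 0 ≤ p s a s') (hp1 : ∀ s a, ∑ s', p s a s' = 1)
    (pol : EuclideanSpace ℝ (Fin d) → S → A → ℝ)
    (hpol0 : ∀ θ s a, 0 < pol θ s a) (hpol1 : ∀ θ s, ∑ a, pol θ s a = 1)
    (hpold : ∀ s a, Differentiable ℝ (fun θ => pol θ s a))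
    (T : ℕ) (hT : 2 ≤ T) (s0 : S) (hs0 : s0 ∈ Safe) :
    ∀ θ : EuclideanSpace ℝ (Fin d),
      ∑ σ : (Fin (T - 1) → A) × (Fin (T - 1) → S),
        (qTraj p pol s0 (T - 1) θ σ * safeProd Safe s0 σ.2 (T - 1)) •
          gradient (fun θ' => WT Safe p pol θ' (stSeq s0 σ.2 (T - 1))) θ =
      ∑ τ : (Fin T → A) × (Fin T → S),
        (qTraj p pol s0 T θ τ * safeProd Safe s0 τ.2 T) •
          ((pol θ (stSeq s0 τ.2 (T - 1)) (pad τ.1 (T - 1)))⁻¹ •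
            gradient (fun θ' => pol θ' (stSeq s0 τ.2 (T - 1)) (pad τ.1 (T - 1))) θ) := by
  intro θ
  obtain ⟨n, rfl⟩ : ∃ n, T = n + 1 := ⟨T - 1, by omega⟩
  simp only [Nat.add_sub_cancel]
  have hsum : ∀ (F : (Fin (n + 1) → A) × (Fin (n + 1) → S) → EuclideanSpace ℝ (Fin d)),
      ∑ τ, F τ = ∑ σ : (Fin n → A) × (Fin n → S), ∑ a : A, ∑ s' : S,
        F (Fin.snoc σ.1 a, Fin.snoc σ.2 s') := by
    intro F
    rw [← Equiv.sum_comp (snocPairEquiv A S n) F, Fintype.sum_prod_type]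
    refine Finset.sum_congr rfl fun σ _ => ?_
    rw [Fintype.sum_prod_type]
    rfl
  rw [hsum]
  refine Finset.sum_congr rfl fun σ _ => ?_
  obtain ⟨aa, ss⟩ := σ
  have h1 : ∀ s' : S, stSeq s0 (Fin.snoc ss s' : Fin (n + 1) → S) n = stSeq s0 ss n :=
    fun s' => stSeq_snoc s0 ss s' le_rfl
  simp only [qTraj_snoc, safeProd_snoc, h1, pad_snoc_last,
    gradient_WT Safe p pol hpold]
  rw [Finset.smul_sum]
  refine Finset.sum_congr rfl fun a _ => ?_
  simp only [smul_smul]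
  rw [← Finset.sum_smul]
  congr 1
  rw [Finset.mul_sum]
  refine Finset.sum_congr rfl fun s' _ => ?_
  have hπ : pol θ (stSeq s0 ss n) a ≠ 0 := (hpol0 θ _ a).ne'
  field_simp
  rw [show qTraj p pol s0 (n + 1 - 1) θ (aa, ss) = qTraj p pol s0 n θ (aa, ss) from rfl]
  ring
end
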